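/- arXiv:1010.5182 — 2 statements merged into one kernel-verified Lean document; each statement's English description precedes it below -/
import Mathlib

section
/- Suppose F = F(M,p,u) : S_N × ℝ^N × ℝ → ℝ (independent of x) satisfies (H0), (H1) and (H3), and let l : ℝ^N → S_N be a linear map. Then the function h : ℝ^N → ℝ defined by h(p) := F(l(p) + p⊗p, p, 1), where p⊗p denotes the rank-one matrix with entries p_i p_j, is convex. -/
open MeasureTheory Metric Set Filter Topology
open scoped UniformConvergence ENNReal

noncomputable section

/-- Square matrices of size `N`, represented as functions. -/
abbrev Mat (N : ℕ) := Fin N → Fin N → ℝ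

/-- Type of fully nonlinear second-order operators `F(M, p, u, x)`. -/
abbrev OpType (N : ℕ) := Mat N → (Fin N → ℝ) → ℝ → (Fin N → ℝ) → ℝ

/-- A matrix is symmetric. -/
def IsSymmMat {N : ℕ} (M : Mat N) : Prop := ∀ i j, M i j = M j i

/-- The `i`-th standard basis vector of `ℝ^N`. -/
def basisVec {N : ℕ} (i : Fin N) : Fin N → ℝ := Pi.single i 1

/-- The gradient `Du(x)` of a function `u : ℝ^N → ℝ`. -/
def Grad {N : ℕ} (u : (Fin N → ℝ) → ℝ) (x : Fin N → ℝ) : Fin N → ℝ :=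
  fun i => fderiv ℝ u x (basisVec i)

/-- The Hessian matrix `D²u(x)` of a function `u : ℝ^N → ℝ`. -/
def Hess {N : ℕ} (u : (Fin N → ℝ) → ℝ) (x : Fin N → ℝ) : Mat N :=
  fun i j => fderiv ℝ (fun y => fderiv ℝ u y (basisVec j)) x (basisVec i)

/-- The set `𝒜` of symmetric matrices whose eigenvalues lie in `[lam, Lam]`,
expressed through the two-sided bound on the associated quadratic form. -/
def PucciMats (N : ℕ) (lam Lam : ℝ) : Set (Mat N) :=
  {A | IsSymmMat A ∧ ∀ v : Fin N → ℝ,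
      lam * ∑ i, v i ^ 2 ≤ ∑ i, ∑ j, A i j * v i * v j ∧
      ∑ i, ∑ j, A i j * v i * v j ≤ Lam * ∑ i, v i ^ 2}

/-- Pucci's maximal operator `M⁺_{lam,Lam}(M) = sup_{A ∈ 𝒜} tr (A M)`. -/
def PucciSup {N : ℕ} (lam Lam : ℝ) (M : Mat N) : ℝ :=
  sSup ((fun A : Mat N => ∑ i, ∑ j, A i j * M j i) '' PucciMats N lam Lam)

/-- Pucci's minimal operator `M⁻_{lam,Lam}(M) = inf_{A ∈ 𝒜} tr (A M)`. -/
def PucciInf {N : ℕ} (lam Lam : ℝ) (M : Mat N) : ℝ :=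
  sInf ((fun A : Mat N => ∑ i, ∑ j, A i j * M j i) '' PucciMats N lam Lam)

/-- `F[u](x) = F(D²u(x), Du(x), u(x), x)`. -/
def FOp {N : ℕ} (F : OpType N) (u : (Fin N → ℝ) → ℝ) (x : Fin N → ℝ) : ℝ :=
  F (Hess u x) (Grad u x) (u x) x

/-- `u ∈ C(Ω̄)` solves `F[u] = g` a.e. in `Ω`, `u = 0` on `∂Ω`. -/
def IsSol {N : ℕ} (F : OpType N) (Ω : Set (Fin N → ℝ)) (g : (Fin N → ℝ) → ℝ)
    (u : (Fin N → ℝ) → ℝ) : Prop :=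
  ContinuousOn u (closure Ω) ∧
  (∀ᵐ x ∂(volume.restrict Ω), FOp F u x = g x) ∧
  ∀ x ∈ frontier Ω, u x = 0

/-- The principal eigenvalue `λ₁⁺(F,Ω)`. -/
def lamPlus {N : ℕ} (F : OpType N) (Ω : Set (Fin N → ℝ)) : ℝ :=
  sSup {μ : ℝ | ∃ ψ : (Fin N → ℝ) → ℝ, ContinuousOn ψ (closure Ω) ∧
    (∀ x ∈ Ω, 0 < ψ x) ∧
    ∀ᵐ x ∂(volume.restrict Ω), FOp F ψ x + μ * ψ x ≤ 0}

/-- The principal eigenvalue `λ₁⁻(F,Ω)`. -/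
def lamMinus {N : ℕ} (F : OpType N) (Ω : Set (Fin N → ℝ)) : ℝ :=
  sSup {μ : ℝ | ∃ ψ : (Fin N → ℝ) → ℝ, ContinuousOn ψ (closure Ω) ∧
    (∀ x ∈ Ω, ψ x < 0) ∧
    ∀ᵐ x ∂(volume.restrict Ω), 0 ≤ FOp F ψ x + μ * ψ x}

/-- `Ω` satisfies a uniform interior ball condition. -/
def UnifIntBall {N : ℕ} (Ω : Set (Fin N → ℝ)) : Prop :=
  ∃ r > (0:ℝ), ∀ x ∈ frontier Ω, ∃ y ∈ Ω, ball y r ⊆ Ω ∧ dist x y = r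

/-- The sup-norm `‖u‖_{L^∞(Ω)}` of a continuous function on `Ω̄`. -/
def supNormOn {N : ℕ} (Ω : Set (Fin N → ℝ)) (u : (Fin N → ℝ) → ℝ) : ℝ :=
  sSup ((fun x => |u x|) '' closure Ω)

/-- The pair `(u,t)` viewed in `C(Ω̄) × ℝ`, where the function space carries
the topology of uniform convergence on `Ω̄`. -/
def pairU {N : ℕ} (Ω : Set (Fin N → ℝ)) (z : ((Fin N → ℝ) → ℝ) × ℝ) :
    (↥(closure Ω) →ᵤ ℝ) × ℝ :=
  (UniformFun.ofFun (fun x : ↥(closure Ω) => z.1 x), z.2)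

/-- The geometric and structural data: a bounded domain `Ω ⊂ ℝ^N` with uniform
interior ball condition, and the constants `0 < lam ≤ Lam`, `gamma, delta ≥ 0`. -/
structure DomainData (N : ℕ) where
  Ω : Set (Fin N → ℝ)
  lam : ℝ
  Lam : ℝ
  gamma : ℝ
  delta : ℝ
  hN : 1 ≤ N
  hopen : IsOpen Ω
  hconn : IsConnected Ω
  hbdd : Bornology.IsBounded Ω
  hball : UnifIntBall Ω
  hlam : 0 < lam
  hlamLam : lam ≤ Lam
  hgamma : 0 ≤ gamma
  hdelta : 0 ≤ delta

/-- The structure hypotheses (H0)-(H3) on the operator `F`. -/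
def DomainData.OpOK {N : ℕ} (D : DomainData N) (F : OpType N) : Prop :=
  -- (H0) positive homogeneity of degree 1
  (∀ t : ℝ, 0 ≤ t → ∀ M p u x, F (t • M) (t • p) (t * u) x = t * F M p u x) ∧
  -- (H1) uniform ellipticity, for a.e. x ∈ Ω
  (∀ᵐ x ∂(volume.restrict D.Ω), ∀ M M' : Mat N, IsSymmMat M → IsSymmMat M' →
    ∀ (p p' : Fin N → ℝ) (u u' : ℝ),
      PucciInf D.lam D.Lam (M - M') - D.gamma * ‖p - p'‖ - D.delta * |u - u'|
          ≤ F M p u x - F M' p' u' x ∧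
        F M p u x - F M' p' u' x
          ≤ PucciSup D.lam D.Lam (M - M') + D.gamma * ‖p - p'‖ + D.delta * |u - u'|) ∧
  -- (H2) continuity of F(M,0,0,x) on S_N × Ω̄
  ContinuousOn (fun q : Mat N × (Fin N → ℝ) => F q.1 0 0 q.2) (univ ×ˢ closure D.Ω) ∧
  -- (H3) convexity-type inequality
  (∀ (M M' : Mat N) (p p' : Fin N → ℝ) (u u' : ℝ), ∀ x ∈ D.Ω,
      -(F (-(M - M')) (-(p - p')) (-(u - u')) x) ≤ F M p u x - F M' p' u' x ∧
      F M p u x - F M' p' u' x ≤ F (M - M') (p - p') (u - u') x)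

/-- `φ` is a principal eigenfunction associated to `λ₁⁺(F,Ω)`:
positive in `Ω`, vanishing on `∂Ω`, with `F[φ] + λ₁⁺ φ = 0`. -/
def IsEigenPlus {N : ℕ} (D : DomainData N) (F : OpType N) (φ : (Fin N → ℝ) → ℝ) : Prop :=
  ContinuousOn φ (closure D.Ω) ∧ (∀ x ∈ D.Ω, 0 < φ x) ∧
  (∀ x ∈ frontier D.Ω, φ x = 0) ∧
  ∀ᵐ x ∂(volume.restrict D.Ω), FOp F φ x + lamPlus F D.Ω * φ x = 0

/-- `φ` is a principal eigenfunction associated to `λ₁⁻(F,Ω)`: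
negative in `Ω`, vanishing on `∂Ω`, with `F[φ] + λ₁⁻ φ = 0`. -/
def IsEigenMinus {N : ℕ} (D : DomainData N) (F : OpType N) (φ : (Fin N → ℝ) → ℝ) : Prop :=
  ContinuousOn φ (closure D.Ω) ∧ (∀ x ∈ D.Ω, φ x < 0) ∧
  (∀ x ∈ frontier D.Ω, φ x = 0) ∧
  ∀ᵐ x ∂(volume.restrict D.Ω), FOp F φ x + lamMinus F D.Ω * φ x = 0

/-- `h ∈ L^p(Ω)` with `p > N`, and `h` is not a multiple of `φ`. -/
def GoodRHS {N : ℕ} (D : DomainData N) (p : ℝ) (h φ : (Fin N → ℝ) → ℝ) : Prop :=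
  (N : ℝ) < p ∧ MemLp h (ENNReal.ofReal p) (volume.restrict D.Ω) ∧
  ¬ ∃ c : ℝ, ∀ x ∈ D.Ω, h x = c * φ x

/-- `u` solves problem `(P_t)` : `F[u] = t φ₁⁺ + h` in `Ω`, `u = 0` on `∂Ω`. -/
def Sol {N : ℕ} (D : DomainData N) (F : OpType N) (φ h : (Fin N → ℝ) → ℝ) (t : ℝ)
    (u : (Fin N → ℝ) → ℝ) : Prop :=
  IsSol F D.Ω (fun x => t * φ x + h x) u


theorem stmt_17
    {N : ℕ} (lam Lam gamma delta : ℝ)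
    (hlam : 0 < lam) (hlL : lam ≤ Lam) (hg : 0 ≤ gamma) (hd : 0 ≤ delta)
    (F : Mat N → (Fin N → ℝ) → ℝ → ℝ)
    (hH0 : ∀ t : ℝ, 0 ≤ t → ∀ (M : Mat N) (p : Fin N → ℝ) (u : ℝ),
        F (t • M) (t • p) (t * u) = t * F M p u)
    (hH1 : ∀ (M M' : Mat N), IsSymmMat M → IsSymmMat M' →
        ∀ (p p' : Fin N → ℝ) (u u' : ℝ),
        PucciInf lam Lam (M - M') - gamma * ‖p - p'‖ - delta * |u - u'|
            ≤ F M p u - F M' p' u' ∧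
          F M p u - F M' p' u'
            ≤ PucciSup lam Lam (M - M') + gamma * ‖p - p'‖ + delta * |u - u'|)
    (hH3 : ∀ (M M' : Mat N) (p p' : Fin N → ℝ) (u u' : ℝ),
        -(F (-(M - M')) (-(p - p')) (-(u - u'))) ≤ F M p u - F M' p' u' ∧
        F M p u - F M' p' u' ≤ F (M - M') (p - p') (u - u'))
    (l : (Fin N → ℝ) →ₗ[ℝ] Mat N) (hl : ∀ p : Fin N → ℝ, IsSymmMat (l p)) :
    ConvexOn ℝ univ (fun p : Fin N → ℝ => F (l p + fun i j => p i * p j) p 1) := by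
  -- subadditivity of F (from H3)
  have hsub : ∀ (M M' : Mat N) (p p' : Fin N → ℝ) (u u' : ℝ),
      F (M + M') (p + p') (u + u') ≤ F M p u + F M' p' u' := by
    intro M M' p p' u u'
    have h := (hH3 (M + M') M' (p + p') p' (u + u') u').2
    simp only [add_sub_cancel_right] at h
    linarith
  -- Pucci's inf is nonnegative on nonnegative rank-one matrices
  have hPucci : ∀ (c : ℝ), 0 ≤ c → ∀ v : Fin N → ℝ,
      0 ≤ PucciInf lam Lam (fun i j => c * (v i * v j)) := by
    intro c hc v
    apply Real.sInf_nonneg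
    rintro r ⟨A, ⟨hAsym, hA⟩, rfl⟩
    have h1 := (hA v).1
    have hsum : ∑ i, ∑ j, A i j * (c * (v j * v i))
        = c * ∑ i, ∑ j, A i j * v i * v j := by
      rw [Finset.mul_sum]
      refine Finset.sum_congr rfl fun i _ => ?_
      rw [Finset.mul_sum]
      refine Finset.sum_congr rfl fun j _ => ?_
      ring
    have hv2 : (0:ℝ) ≤ ∑ i, v i ^ 2 := Finset.sum_nonneg fun i _ => sq_nonneg _
    have : (0:ℝ) ≤ ∑ i, ∑ j, A i j * v i * v j :=
      le_trans (mul_nonneg hlam.le hv2) h1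
    simpa [PucciInf, hsum] using mul_nonneg hc this
  -- symmetry of the matrices involved
  have hsymM : ∀ p : Fin N → ℝ, IsSymmMat (l p + fun i j => p i * p j) := by
    intro p i j
    simp only [Pi.add_apply]
    rw [hl p i j, mul_comm]
  refine ⟨convex_univ, ?_⟩
  intro x _ y _ a b ha hb hab
  set Mx : Mat N := l x + fun i j => x i * x j with hMxdef
  set My : Mat N := l y + fun i j => y i * y j with hMydef
  set z : Fin N → ℝ := a • x + b • y with hzdef
  set Mz : Mat N := l z + fun i j => z i * z j with hMzdef
  have hMxs : IsSymmMat Mx := hsymM x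
  have hMys : IsSymmMat My := hsymM y
  have hMzs : IsSymmMat Mz := hsymM z
  have hsyms : IsSymmMat (a • Mx + b • My) := by
    intro i j
    simp only [Pi.add_apply, Pi.smul_apply, smul_eq_mul]
    rw [hMxs i j, hMys i j]
  -- the matrix difference is a nonnegative rank-one matrix
  have hD : (a • Mx + b • My) - Mz
      = fun i j => (a * b) * ((x - y) i * (x - y) j) := by
    funext i j
    have hb' : b = 1 - a := by linarith
    simp only [hMxdef, hMydef, hMzdef, hzdef, Pi.add_apply, Pi.sub_apply,
      Pi.smul_apply, smul_eq_mul, l.map_add, l.map_smul]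
    subst hb'
    ring
  -- step 1: monotonicity in the matrix argument
  have key1 : F Mz z 1 ≤ F (a • Mx + b • My) z 1 := by
    have h := (hH1 (a • Mx + b • My) Mz hsyms hMzs z z 1 1).1
    rw [hD] at h
    have h0 := hPucci (a * b) (mul_nonneg ha hb) (x - y)
    simp only [sub_self, norm_zero, abs_zero, mul_zero, sub_zero] at h
    linarith
  -- step 2: sublinearity
  have key2 : F (a • Mx + b • My) z 1 ≤ a * F Mx x 1 + b * F My y 1 := by
    have h1 : (1:ℝ) = a * 1 + b * 1 := by linarith
    calc F (a • Mx + b • My) z 1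
        = F (a • Mx + b • My) (a • x + b • y) (a * 1 + b * 1) := by
          rw [← h1, hzdef]
      _ ≤ F (a • Mx) (a • x) (a * 1) + F (b • My) (b • y) (b * 1) :=
          hsub _ _ _ _ _ _
      _ = a * F Mx x 1 + b * F My y 1 := by
          rw [hH0 a ha, hH0 b hb]
  simp only [smul_eq_mul]
  calc F (l (a • x + b • y) + fun i j => (a • x + b • y) i * (a • x + b • y) j)
        (a • x + b • y) 1 = F Mz z 1 := by rw [hMzdef, hzdef]
    _ ≤ a * F Mx x 1 + b * F My y 1 := le_trans key1 key2
    _ = a * F (l x + fun i j => x i * x j) x 1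
        + b * F (l y + fun i j => y i * y j) y 1 := by rw [hMxdef, hMydef]

end
end

section
/- Let Ω̄ ⊂ ℝ^N be compact, let n ∈ ℕ, and let R ⊂ C(Ω̄) × [−n, n] be a compact connected set (C(Ω̄) carrying the uniform norm) such that the projection 𝒫(u,t) = t satisfies 𝒫(R) = [−n, n]. Let [t₋, t₊] ⊂ [−n, n] and set R₀ = {(u,t) ∈ R : t ∈ [t₋, t₊]}. Then there exists a connected component E₀ of R₀ such that 𝒫(E₀) = [t₋, t₊]. -/
open MeasureTheory Metric Set Filter Topology
open scoped UniformConvergence ENNReal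

noncomputable section

lemma aux_clopen_sep {X : Type*} [TopologicalSpace X] [CompactSpace X] [T2Space X]
    {B : Set X} (hB : IsClosed B) (x : X) (hx : connectedComponent x ∩ B = ∅) :
    ∃ Z : Set X, IsClopen Z ∧ x ∈ Z ∧ Z ∩ B = ∅ := by
  have hBc : IsCompact B := hB.isCompact
  have hint : (B ∩ ⋂ s : { s : Set X // IsClopen s ∧ x ∈ s }, (s : Set X)) = ∅ := by
    rw [← connectedComponent_eq_iInter_isClopen x, Set.inter_comm]
    exact hx
  obtain ⟨t, ht⟩ := hBc.elim_finite_subfamily_closed _ (fun s => s.2.1.1) hint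
  refine ⟨⋂ s ∈ t, (s : Set X), isClopen_biInter_finset (fun s _ => s.2.1), ?_, ?_⟩
  · exact Set.mem_iInter₂.mpr fun s _ => s.2.2
  · rw [Set.inter_comm]; exact ht

lemma aux_clopen_sep2 {X : Type*} [TopologicalSpace X] [CompactSpace X] [T2Space X]
    {A B : Set X} (hA : IsClosed A) (hB : IsClosed B)
    (h : ∀ x ∈ A, connectedComponent x ∩ B = ∅) :
    ∃ Z : Set X, IsClopen Z ∧ A ⊆ Z ∧ Z ∩ B = ∅ := by
  choose Z hZclopen hmemZ hZB using fun x : ↥A => aux_clopen_sep hB x.1 (h x.1 x.2)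
  have hcover : A ⊆ ⋃ x : ↥A, Z x := fun a ha =>
    Set.mem_iUnion.mpr ⟨⟨a, ha⟩, hmemZ ⟨a, ha⟩⟩
  obtain ⟨t, ht⟩ := hA.isCompact.elim_finite_subcover Z (fun x => (hZclopen x).isOpen) hcover
  refine ⟨⋃ x ∈ t, Z x, isClopen_biUnion_finset (fun x _ => hZclopen x), ht, ?_⟩
  rw [Set.eq_empty_iff_forall_notMem]
  rintro y ⟨hy1, hy2⟩
  obtain ⟨x, -, hx⟩ := Set.mem_iUnion₂.mp hy1
  exact Set.eq_empty_iff_forall_notMem.mp (hZB x) y ⟨hx, hy2⟩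

theorem stmt_18
    {N : ℕ} (K : Set (Fin N → ℝ)) (hK : IsCompact K)
    (n : ℕ) (R : Set (ContinuousMap ↥K ℝ × ℝ))
    (hRcomp : IsCompact R) (hRconn : IsConnected R)
    (hRproj : (fun z : ContinuousMap ↥K ℝ × ℝ => z.2) '' R = Icc (-(n:ℝ)) n)
    (tm tp : ℝ) (htm : tm ≤ tp) (hsub : Icc tm tp ⊆ Icc (-(n:ℝ)) n) :
    ∃ E₀ : Set (ContinuousMap ↥K ℝ × ℝ),
      -- E₀ is a connected component of R₀ = {(u,t) ∈ R : t ∈ [t₋, t₊]} ...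
      E₀ ⊆ {z ∈ R | z.2 ∈ Icc tm tp} ∧ E₀.Nonempty ∧ IsPreconnected E₀ ∧
      (∀ E : Set (ContinuousMap ↥K ℝ × ℝ),
        E₀ ⊆ E → E ⊆ {z ∈ R | z.2 ∈ Icc tm tp} → IsPreconnected E → E = E₀) ∧
      -- ... whose projection is all of [t₋, t₊]
      (fun z : ContinuousMap ↥K ℝ × ℝ => z.2) '' E₀ = Icc tm tp := by
  classical
  set R₀ : Set (ContinuousMap ↥K ℝ × ℝ) := {z ∈ R | z.2 ∈ Icc tm tp} with hR₀def
  have hR₀comp : IsCompact R₀ := hRcomp.inter_right (isClosed_Icc.preimage continuous_snd)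
  have : CompactSpace ↥R₀ := isCompact_iff_compactSpace.mp hR₀comp
  have htmmem : tm ∈ Icc (-(n:ℝ)) n := hsub ⟨le_rfl, htm⟩
  have htpmem : tp ∈ Icc (-(n:ℝ)) n := hsub ⟨htm, le_rfl⟩
  obtain ⟨a0, ha0R, ha0t⟩ : ∃ z ∈ R, z.2 = tm := by
    rw [← hRproj] at htmmem; obtain ⟨z, hz, hz2⟩ := htmmem; exact ⟨z, hz, hz2⟩
  obtain ⟨b0, hb0R, hb0t⟩ : ∃ z ∈ R, z.2 = tp := by
    rw [← hRproj] at htpmem; obtain ⟨z, hz, hz2⟩ := htpmem; exact ⟨z, hz, hz2⟩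
  have ha0R₀ : a0 ∈ R₀ := ⟨ha0R, by rw [ha0t]; exact ⟨le_rfl, htm⟩⟩
  have hb0R₀ : b0 ∈ R₀ := ⟨hb0R, by rw [hb0t]; exact ⟨htm, le_rfl⟩⟩
  have key : ∃ a ∈ R₀, a.2 = tm ∧ ∃ b ∈ connectedComponentIn R₀ a, b.2 = tp := by
    rcases eq_or_lt_of_le htm with heq | hlt
    · exact ⟨a0, ha0R₀, ha0t, a0, mem_connectedComponentIn ha0R₀, ha0t.trans heq⟩
    · by_contra hcon
      push_neg at hcon
      set A : Set ↥R₀ := {x | (x : ContinuousMap ↥K ℝ × ℝ).2 = tm} with hAdef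
      set B : Set ↥R₀ := {x | (x : ContinuousMap ↥K ℝ × ℝ).2 = tp} with hBdef
      have hAclosed : IsClosed A :=
        isClosed_eq (continuous_snd.comp continuous_subtype_val) continuous_const
      have hBclosed : IsClosed B :=
        isClosed_eq (continuous_snd.comp continuous_subtype_val) continuous_const
      have hdisj : ∀ x ∈ A, connectedComponent x ∩ B = ∅ := by
        intro x hx
        rw [Set.eq_empty_iff_forall_notMem]
        rintro y ⟨hy, hy2⟩
        refine hcon (↑x) x.2 hx (↑y) ?_ hy2
        rw [connectedComponentIn_eq_image x.2]
        exact ⟨y, hy, rfl⟩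
      obtain ⟨Z, hZclopen, hAZ, hZB⟩ := aux_clopen_sep2 hAclosed hBclosed hdisj
      obtain ⟨U, hUopen, hZU⟩ := isOpen_induced_iff.mp hZclopen.isOpen
      obtain ⟨V, hVopen, hZV⟩ := isOpen_induced_iff.mp hZclopen.isClosed.isOpen_compl
      have hmemU : ∀ z (hz : z ∈ R₀), z ∈ U ↔ (⟨z, hz⟩ : ↥R₀) ∈ Z := by
        intro z hz
        constructor
        · intro h; rw [← hZU]; exact h
        · intro h; rw [← hZU] at h; exact h
      have hmemV : ∀ z (hz : z ∈ R₀), z ∈ V ↔ (⟨z, hz⟩ : ↥R₀) ∉ Z := by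
        intro z hz
        constructor
        · intro h
          have h2 : (⟨z, hz⟩ : ↥R₀) ∈ Subtype.val ⁻¹' V := h
          rw [hZV] at h2; exact h2
        · intro h
          have h2 : (⟨z, hz⟩ : ↥R₀) ∈ Zᶜ := h
          rw [← hZV] at h2; exact h2
      set U' : Set (ContinuousMap ↥K ℝ × ℝ) :=
        (U ∩ {z | z.2 < tp}) ∪ {z | z.2 < tm} with hU'def
      set V' : Set (ContinuousMap ↥K ℝ × ℝ) :=
        (V ∩ {z | tm < z.2}) ∪ {z | tp < z.2} with hV'def
      have hU'open : IsOpen U' :=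
        (hUopen.inter (isOpen_lt continuous_snd continuous_const)).union
          (isOpen_lt continuous_snd continuous_const)
      have hV'open : IsOpen V' :=
        (hVopen.inter (isOpen_lt continuous_const continuous_snd)).union
          (isOpen_lt continuous_const continuous_snd)
      have hcover : R ⊆ U' ∪ V' := by
        intro z hz
        rcases lt_or_ge z.2 tm with h1 | h1
        · exact Or.inl (Or.inr h1)
        rcases lt_or_ge tp z.2 with h2 | h2
        · exact Or.inr (Or.inr h2)
        have hzR₀ : z ∈ R₀ := ⟨hz, h1, h2⟩
        by_cases hzZ : (⟨z, hzR₀⟩ : ↥R₀) ∈ Z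
        · refine Or.inl (Or.inl ⟨(hmemU z hzR₀).mpr hzZ, lt_of_le_of_ne h2 ?_⟩)
          intro heq
          have hzB : (⟨z, hzR₀⟩ : ↥R₀) ∈ B := heq
          exact Set.eq_empty_iff_forall_notMem.mp hZB _ ⟨hzZ, hzB⟩
        · refine Or.inr (Or.inl ⟨(hmemV z hzR₀).mpr hzZ, lt_of_le_of_ne h1 ?_⟩)
          intro heq
          exact hzZ (hAZ (show (⟨z, hzR₀⟩ : ↥R₀) ∈ A from heq.symm))
      have hUne : (R ∩ U').Nonempty := by
        refine ⟨a0, ha0R, Or.inl ⟨?_, show a0.2 < tp by rw [ha0t]; exact hlt⟩⟩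
        exact (hmemU a0 ha0R₀).mpr (hAZ (show (⟨a0, ha0R₀⟩ : ↥R₀) ∈ A from ha0t))
      have hVne : (R ∩ V').Nonempty := by
        refine ⟨b0, hb0R, Or.inl ⟨?_, show tm < b0.2 by rw [hb0t]; exact hlt⟩⟩
        refine (hmemV b0 hb0R₀).mpr ?_
        intro hb0Z
        exact Set.eq_empty_iff_forall_notMem.mp hZB _
          ⟨hb0Z, show (⟨b0, hb0R₀⟩ : ↥R₀) ∈ B from hb0t⟩
      obtain ⟨z, hzR, hzU', hzV'⟩ :=
        hRconn.isPreconnected U' V' hU'open hV'open hcover hUne hVne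
      rcases hzU' with (⟨hzU, hzlt⟩ | hzlt) <;> rcases hzV' with (⟨hzV, hzgt⟩ | hzgt)
      · have hzR₀ : z ∈ R₀ := ⟨hzR, le_of_lt hzgt, le_of_lt hzlt⟩
        exact (hmemV z hzR₀).mp hzV ((hmemU z hzR₀).mp hzU)
      · exact absurd ((show z.2 < tp from hzlt).trans (show tp < z.2 from hzgt)) (lt_irrefl _)
      · exact absurd ((show z.2 < tm from hzlt).trans (show tm < z.2 from hzgt)) (lt_irrefl _)
      · exact absurd (((show z.2 < tm from hzlt).trans_le htm).trans
          (show tp < z.2 from hzgt)) (lt_irrefl _)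
  obtain ⟨a, haR₀, hat, b, hbcomp, hbt⟩ := key
  refine ⟨connectedComponentIn R₀ a, connectedComponentIn_subset R₀ a,
    ⟨a, mem_connectedComponentIn haR₀⟩, isPreconnected_connectedComponentIn, ?_, ?_⟩
  · intro E hE1 hE2 hE3
    exact subset_antisymm
      (hE3.subset_connectedComponentIn (hE1 (mem_connectedComponentIn haR₀)) hE2) hE1
  · apply subset_antisymm
    · rintro _ ⟨z, hz, rfl⟩
      exact (connectedComponentIn_subset R₀ a hz).2
    · have himg : IsPreconnected ((fun z : ContinuousMap ↥K ℝ × ℝ => z.2) ''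
          connectedComponentIn R₀ a) :=
        isPreconnected_connectedComponentIn.image _ continuous_snd.continuousOn
      exact himg.Icc_subset ⟨a, mem_connectedComponentIn haR₀, hat⟩ ⟨b, hbcomp, hbt⟩


end
end
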